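/- If X and Y are independent generalized Poisson difference random variables with parameters (θ₁, θ₂, λ) and (θ₃, θ₄, λ), then X − Y is a generalized Poisson difference random variable with parameters (θ₁ + θ₄, θ₂ + θ₃, λ). -/

import Mathlib

open MeasureTheory ProbabilityTheory

/-- The generalized Poisson difference pmf `GPD(θ₁, θ₂, λ)`:
`P(Z = z) = e^{-θ₁-θ₂-zλ} ∑_{s ≥ max(0,-z)} [θ₂(θ₂+sλ)^{s-1}/s!]·[θ₁(θ₁+(s+z)λ)^{s+z-1}/(s+z)!]·e^{-2sλ}`. -/
noncomputable def gpdPmf (θ1 θ2 lam : ℝ) (z : ℤ) : ℝ :=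
  Real.exp (-θ1 - θ2 - z * lam) *
    ∑' s : ℕ, if 0 ≤ (s : ℤ) + z then
      (θ2 * (θ2 + s * lam) ^ ((s : ℝ) - 1) / (Nat.factorial s)) *
      (θ1 * (θ1 + ((s : ℝ) + (z : ℝ)) * lam) ^ (((s : ℝ) + (z : ℝ)) - 1) /
        (Nat.factorial ((s : ℤ) + z).toNat)) *
      Real.exp (-2 * s * lam)
    else 0

/-- `Z` follows a generalized Poisson difference distribution `GPD(θ₁, θ₂, λ)` under `P`,
i.e. `Z` is distributed as the difference of two independent `GP(θ₁, λ)` and `GP(θ₂, λ)`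
random variables. -/
def HasGPD {Ω : Type*} [MeasurableSpace Ω] (P : Measure Ω) (Z : Ω → ℤ) (θ1 θ2 lam : ℝ) : Prop :=
  ∀ z : ℤ, P {ω | Z ω = z} = ENNReal.ofReal (gpdPmf θ1 θ2 lam z)

open Finset
open scoped ENNReal


lemma fd (n : ℕ) : ∀ j < n, ∑ k ∈ range (n+1), (-1:ℝ)^k * (n.choose k) * (k:ℝ)^j = 0 := by
  induction n with
  | zero => intro j hj; omega
  | succ n ih =>
    intro j hj
    have step1 : ∑ k ∈ range (n+2), (-1:ℝ)^k * ((n+1).choose k) * (k:ℝ)^j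
        = ∑ k ∈ range (n+1), (-1:ℝ)^k * (n.choose k) * ((k:ℝ)^j - ((k:ℝ)+1)^j) := by
      rw [Finset.sum_range_succ' _ (n+1)]
      have e0 : ∑ k ∈ range (n+1), (-1:ℝ)^(k+1) * ((n+1).choose (k+1)) * ((k+1:ℕ):ℝ)^j
          = ∑ k ∈ range (n+1), ((-1:ℝ)^(k+1) * (n.choose (k+1)) * (((k:ℝ))+1)^j
            + (-1:ℝ)^(k+1) * (n.choose k) * (((k:ℝ))+1)^j) := by
        apply Finset.sum_congr rfl; intro k _
        rw [Nat.choose_succ_succ]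
        push_cast; ring
      rw [e0, Finset.sum_add_distrib]
      have e1 : ∑ k ∈ range (n+1), (-1:ℝ)^(k+1) * (n.choose (k+1)) * (((k:ℝ))+1)^j
            + (-1:ℝ)^0 * ((n+1).choose 0) * ((0:ℕ):ℝ)^j
          = ∑ k ∈ range (n+1), (-1:ℝ)^k * (n.choose k) * (k:ℝ)^j := by
        have h2 : ∑ k ∈ range (n+2), (-1:ℝ)^k * (n.choose k) * (k:ℝ)^j
            = ∑ k ∈ range (n+1), (-1:ℝ)^k * (n.choose k) * (k:ℝ)^j := by
          rw [Finset.sum_range_succ, Nat.choose_succ_self]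
          simp
        rw [← h2, Finset.sum_range_succ' _ (n+1)]
        push_cast
        ring_nf
        simp
      have e3 : ∑ k ∈ range (n+1), (-1:ℝ)^(k+1) * (n.choose k) * (((k:ℝ))+1)^j
          = -∑ k ∈ range (n+1), (-1:ℝ)^k * (n.choose k) * (((k:ℝ))+1)^j := by
        rw [← Finset.sum_neg_distrib]; apply Finset.sum_congr rfl; intro k _; ring
      have rhs : ∑ k ∈ range (n+1), (-1:ℝ)^k * (n.choose k) * ((k:ℝ)^j - ((k:ℝ)+1)^j)
          = ∑ k ∈ range (n+1), (-1:ℝ)^k * (n.choose k) * (k:ℝ)^j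
            - ∑ k ∈ range (n+1), (-1:ℝ)^k * (n.choose k) * ((k:ℝ)+1)^j := by
        rw [← Finset.sum_sub_distrib]
        apply Finset.sum_congr rfl; intro k _; ring
      rw [rhs]
      linarith [e1, e3]
    rw [step1]
    have e2 : ∀ k : ℕ, (k:ℝ)^j - ((k:ℝ)+1)^j = -∑ i ∈ range j, (k:ℝ)^i * (j.choose i) := by
      intro k
      have expand : ((k:ℝ)+1)^j = ∑ i ∈ range (j+1), (k:ℝ)^i * (j.choose i) := by
        rw [add_pow]
        apply Finset.sum_congr rfl; intro i _; rw [one_pow, mul_one]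
      rw [expand, Finset.sum_range_succ, Nat.choose_self]
      push_cast; ring
    have this1 : ∀ x ∈ range (n+1), (-1:ℝ)^x * (n.choose x) * ((x:ℝ)^j - ((x:ℝ)+1)^j)
        = ∑ i ∈ range j, -((j.choose i : ℝ) * ((-1:ℝ)^x * (n.choose x) * (x:ℝ)^i)) := by
      intro x _
      rw [e2, mul_neg, Finset.mul_sum, ← Finset.sum_neg_distrib]
      apply Finset.sum_congr rfl; intro i _; ring
    rw [Finset.sum_congr rfl this1, Finset.sum_comm]
    apply Finset.sum_eq_zero
    intro i hi
    have : ∑ x ∈ range (n+1), (-1:ℝ)^x * (n.choose x) * (x:ℝ)^i = 0 :=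
      ih i (by simp at hi; omega)
    calc ∑ x ∈ range (n+1), -((j.choose i : ℝ) * ((-1:ℝ)^x * (n.choose x) * (x:ℝ)^i))
        = -((j.choose i : ℝ) * ∑ x ∈ range (n+1), (-1:ℝ)^x * (n.choose x) * (x:ℝ)^i) := by
          rw [Finset.sum_neg_distrib, ← Finset.mul_sum]
      _ = 0 := by rw [this]; ring

noncomputable def fgp (lam x : ℝ) (k : ℕ) : ℝ := if k = 0 then 1 else x * (x + k*lam)^(k-1)

lemma neg_one_pow_sub (m k : ℕ) (h : k ≤ m) : (-1:ℝ)^(m-k) = (-1)^m * (-1)^k := by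
  have h2 : (-1:ℝ)^k * (-1)^k = 1 := by
    rw [← pow_add]
    exact Even.neg_one_pow ⟨k, rfl⟩
  calc (-1:ℝ)^(m-k) = (-1)^(m-k) * ((-1)^k * (-1)^k) := by rw [h2, mul_one]
    _ = ((-1)^(m-k) * (-1)^k) * (-1)^k := by ring
    _ = (-1)^m * (-1)^k := by rw [← pow_add]; congr 2; omega

lemma choose_sub_mul (n k : ℕ) (h : k ≤ n) :
    ((n+1-k:ℕ):ℝ) * ((n+1).choose k : ℝ) = ((n+1:ℕ):ℝ) * (n.choose k : ℝ) := by
  have h1 := Nat.add_one_mul_choose_eq n (n-k)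
  rw [Nat.choose_symm h] at h1
  have h2 : n - k + 1 = n + 1 - k := by omega
  rw [h2] at h1
  have h3 : (n+1).choose (n+1-k) = (n+1).choose k := Nat.choose_symm (by omega)
  rw [h3] at h1
  have := congrArg (fun t : ℕ => (t:ℝ)) h1
  push_cast at this ⊢
  linarith [this]

lemma abelA (lam x : ℝ) : ∀ (n : ℕ) (y : ℝ),
    ∑ k ∈ range (n+1), (n.choose k : ℝ) * fgp lam x k * (y + ((n-k : ℕ):ℝ)*lam)^(n-k)
      = (x + y + n*lam)^n := by
  intro n
  induction n with
  | zero => intro y; simp [fgp]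
  | succ n ih =>
    -- the function and its derivative
    have hF : ∀ y:ℝ, HasDerivAt
        (fun y => ∑ k ∈ range (n+2), ((n+1).choose k:ℝ) * fgp lam x k * (y + ((n+1-k:ℕ):ℝ)*lam)^(n+1-k))
        (∑ k ∈ range (n+2), ((n+1).choose k:ℝ) * fgp lam x k * (((n+1-k:ℕ):ℝ) * (y + ((n+1-k:ℕ):ℝ)*lam)^(n+1-k-1))) y := by
      intro y
      apply HasDerivAt.fun_sum
      intro k _
      have h1 : HasDerivAt (fun y:ℝ => y + ((n+1-k:ℕ):ℝ)*lam) 1 y := (hasDerivAt_id y).add_const _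
      have h2 := h1.fun_pow (n+1-k)
      have h3 := h2.const_mul (((n+1).choose k:ℝ) * fgp lam x k)
      simpa [mul_one] using h3
    have hG : ∀ y:ℝ, HasDerivAt (fun y => (x + y + ((n+1:ℕ):ℝ)*lam)^(n+1))
        (((n+1:ℕ):ℝ) * (x + y + ((n+1:ℕ):ℝ)*lam)^n) y := by
      intro y
      have h1 : HasDerivAt (fun y:ℝ => x + y + ((n+1:ℕ):ℝ)*lam) 1 y :=
        ((hasDerivAt_id y).const_add x).add_const _
      have h2 := h1.fun_pow (n+1)
      simpa [mul_one] using h2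
    -- derivative of F equals derivative of G, via the induction hypothesis
    have key : ∀ y:ℝ,
        ∑ k ∈ range (n+2), ((n+1).choose k:ℝ) * fgp lam x k * (((n+1-k:ℕ):ℝ) * (y + ((n+1-k:ℕ):ℝ)*lam)^(n+1-k-1))
          = ((n+1:ℕ):ℝ) * (x + y + ((n+1:ℕ):ℝ)*lam)^n := by
      intro y
      rw [Finset.sum_range_succ]
      have hlast : (((n+1-(n+1):ℕ):ℝ)) = 0 := by norm_num
      rw [hlast]
      have e0 : ∑ k ∈ range (n+1), ((n+1).choose k:ℝ) * fgp lam x k * (((n+1-k:ℕ):ℝ) * (y + ((n+1-k:ℕ):ℝ)*lam)^(n+1-k-1))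
          = ((n+1:ℕ):ℝ) * ∑ k ∈ range (n+1), (n.choose k : ℝ) * fgp lam x k * ((y+lam) + ((n-k : ℕ):ℝ)*lam)^(n-k) := by
        rw [Finset.mul_sum]
        apply Finset.sum_congr rfl
        intro k hk
        have hk' : k ≤ n := by simp [Finset.mem_range] at hk; omega
        have hc := choose_sub_mul n k hk'
        have hb : (y + ((n+1-k:ℕ):ℝ)*lam) = ((y+lam) + ((n-k:ℕ):ℝ)*lam) := by
          rw [Nat.cast_sub (by omega), Nat.cast_sub hk']
          push_cast; ring
        have he : n+1-k-1 = n-k := by omega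
        rw [he, hb]
        linear_combination (fgp lam x k * ((y+lam) + ((n-k:ℕ):ℝ)*lam)^(n-k)) * hc
      rw [e0, ih (y+lam)]
      have : (x + (y+lam) + (n:ℝ)*lam) = (x + y + ((n+1:ℕ):ℝ)*lam) := by push_cast; ring
      rw [this]
      ring
    -- F - G has zero derivative
    have hD : ∀ y:ℝ, HasDerivAt
        (fun y => (∑ k ∈ range (n+2), ((n+1).choose k:ℝ) * fgp lam x k * (y + ((n+1-k:ℕ):ℝ)*lam)^(n+1-k))
          - (x + y + ((n+1:ℕ):ℝ)*lam)^(n+1)) 0 y := by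
      intro y
      have := (hF y).sub (hG y)
      rwa [key y, sub_self] at this
    have hconst : ∀ y y' : ℝ,
        (∑ k ∈ range (n+2), ((n+1).choose k:ℝ) * fgp lam x k * (y + ((n+1-k:ℕ):ℝ)*lam)^(n+1-k))
          - (x + y + ((n+1:ℕ):ℝ)*lam)^(n+1)
        = (∑ k ∈ range (n+2), ((n+1).choose k:ℝ) * fgp lam x k * (y' + ((n+1-k:ℕ):ℝ)*lam)^(n+1-k))
          - (x + y' + ((n+1:ℕ):ℝ)*lam)^(n+1) :=
      is_const_of_deriv_eq_zero (fun y => (hD y).differentiableAt) (fun y => (hD y).deriv)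
    -- evaluation at y₀ = -x - (n+1)λ
    have heval :
        (∑ k ∈ range (n+2), ((n+1).choose k:ℝ) * fgp lam x k * ((-x - ((n+1:ℕ):ℝ)*lam) + ((n+1-k:ℕ):ℝ)*lam)^(n+1-k))
          - (x + (-x - ((n+1:ℕ):ℝ)*lam) + ((n+1:ℕ):ℝ)*lam)^(n+1) = 0 := by
      have hbase : (x + (-x - ((n+1:ℕ):ℝ)*lam) + ((n+1:ℕ):ℝ)*lam) = 0 := by ring
      rw [hbase, zero_pow (Nat.succ_ne_zero n), sub_zero]
      have hterm : ∀ k ∈ range (n+2),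
          ((n+1).choose k:ℝ) * fgp lam x k * ((-x - ((n+1:ℕ):ℝ)*lam) + ((n+1-k:ℕ):ℝ)*lam)^(n+1-k)
          = ((n+1).choose k:ℝ) * ((-1:ℝ)^(n+1) * (-1)^k * (x * (x + (k:ℝ)*lam)^n)) := by
        intro k hk
        have hk' : k ≤ n+1 := by simp [Finset.mem_range] at hk; omega
        have hb : ((-x - ((n+1:ℕ):ℝ)*lam) + ((n+1-k:ℕ):ℝ)*lam) = -(x + (k:ℝ)*lam) := by
          rw [Nat.cast_sub hk']
          push_cast; ring
        have hfg : fgp lam x k * (x + (k:ℝ)*lam)^(n+1-k) = x * (x + (k:ℝ)*lam)^n := by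
          by_cases hk0 : k = 0
          · subst hk0
            simp [fgp]
            rw [pow_succ']
          · simp only [fgp, if_neg hk0]
            rw [mul_assoc, ← pow_add, show (k-1) + (n+1-k) = n from by omega]
        rw [hb, neg_pow, neg_one_pow_sub (n+1) k hk']
        linear_combination (((n+1).choose k:ℝ) * ((-1:ℝ)^(n+1) * (-1:ℝ)^k)) * hfg
      rw [Finset.sum_congr rfl hterm]
      -- expand (x + kλ)^n and swap sums
      have hexp : ∀ k : ℕ, (x + (k:ℝ)*lam)^n = ∑ j ∈ range (n+1), ((k:ℝ)*lam)^j * x^(n-j) * (n.choose j : ℝ) := by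
        intro k
        rw [add_comm, add_pow]
      have hterm2 : ∀ k ∈ range (n+2),
          ((n+1).choose k:ℝ) * ((-1:ℝ)^(n+1) * (-1)^k * (x * (x + (k:ℝ)*lam)^n))
          = ∑ j ∈ range (n+1), ((-1:ℝ)^(n+1) * x * lam^j * x^(n-j) * (n.choose j : ℝ))
              * ((-1:ℝ)^k * ((n+1).choose k : ℝ) * (k:ℝ)^j) := by
        intro k _
        rw [hexp k, Finset.mul_sum, Finset.mul_sum, Finset.mul_sum]
        apply Finset.sum_congr rfl
        intro j _
        ring
      rw [Finset.sum_congr rfl hterm2, Finset.sum_comm]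
      apply Finset.sum_eq_zero
      intro j hj
      rw [← Finset.mul_sum, fd (n+1) j (by simp [Finset.mem_range] at hj; omega), mul_zero]
    intro y
    have := hconst y (-x - ((n+1:ℕ):ℝ)*lam)
    rw [heval] at this
    push_cast at this ⊢
    linarith [this]

lemma cauchyC (lam x y : ℝ) (n : ℕ) :
    ∑ k ∈ range (n+1), (n.choose k : ℝ) * fgp lam x k * fgp lam y (n-k) = fgp lam (x+y) n := by
  cases n with
  | zero => simp [fgp]
  | succ m =>
    rw [Finset.sum_range_succ' _ (m+1)]
    have e0 : ∑ k ∈ range (m+1), ((m+1).choose (k+1) : ℝ) * fgp lam x (k+1) * fgp lam y (m+1-(k+1))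
        = (∑ k ∈ range (m+1), (m.choose (k+1) : ℝ) * fgp lam x (k+1) * fgp lam y (m-k))
          + ∑ k ∈ range (m+1), (m.choose k : ℝ) * fgp lam x (k+1) * fgp lam y (m-k) := by
      rw [← Finset.sum_add_distrib]
      apply Finset.sum_congr rfl
      intro k _
      have h1 : m+1-(k+1) = m-k := by omega
      rw [h1, Nat.choose_succ_succ]
      push_cast; ring
    have hT : (∑ k ∈ range (m+1), (m.choose (k+1) : ℝ) * fgp lam x (k+1) * fgp lam y (m-k))
        + ((m+1).choose 0 : ℝ) * fgp lam x 0 * fgp lam y (m+1-0)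
        = y * (x + y + ((m+1:ℕ):ℝ)*lam)^m := by
      have t1 : (∑ k ∈ range (m+1), (m.choose (k+1) : ℝ) * fgp lam x (k+1) * fgp lam y (m-k))
          + ((m+1).choose 0 : ℝ) * fgp lam x 0 * fgp lam y (m+1-0)
          = ∑ k ∈ range (m+2), (m.choose k : ℝ) * fgp lam x k * fgp lam y (m+1-k) := by
        rw [Finset.sum_range_succ' (fun k => (m.choose k : ℝ) * fgp lam x k * fgp lam y (m+1-k)) (m+1)]
        congr 1
        · apply Finset.sum_congr rfl
          intro k _
          have h1 : m+1-(k+1) = m-k := by omega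
          rw [h1]
        · norm_num
      rw [t1, Finset.sum_range_succ, Nat.choose_succ_self]
      push_cast
      rw [zero_mul, zero_mul, add_zero]
      have t3 : ∀ k ∈ range (m+1), (m.choose k : ℝ) * fgp lam x k * fgp lam y (m+1-k)
          = y * ((m.choose k : ℝ) * fgp lam x k * ((y+lam) + ((m-k:ℕ):ℝ)*lam)^(m-k)) := by
        intro k hk
        have hk' : k ≤ m := by simp [Finset.mem_range] at hk; omega
        have h2 : m+1-k ≠ 0 := by omega
        have h3 : fgp lam y (m+1-k) = y * ((y+lam) + ((m-k:ℕ):ℝ)*lam)^(m-k) := by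
          simp only [fgp, if_neg h2]
          have hb : (y + ((m+1-k:ℕ):ℝ)*lam) = ((y+lam) + ((m-k:ℕ):ℝ)*lam) := by
            rw [Nat.cast_sub (by omega), Nat.cast_sub hk']
            push_cast; ring
          have he : m+1-k-1 = m-k := by omega
          rw [hb, he]
        rw [h3]; ring
      rw [Finset.sum_congr rfl t3, ← Finset.mul_sum, abelA lam x m (y+lam)]
      push_cast; ring
    have hA : ∑ k ∈ range (m+1), (m.choose k : ℝ) * fgp lam x (k+1) * fgp lam y (m-k)
        = x * (x + y + ((m+1:ℕ):ℝ)*lam)^m := by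
      rw [← Finset.sum_range_reflect]
      have t4 : ∀ j ∈ range (m+1),
          (m.choose (m+1-1-j) : ℝ) * fgp lam x ((m+1-1-j)+1) * fgp lam y (m-(m+1-1-j))
          = x * ((m.choose j : ℝ) * fgp lam y j * ((x+lam) + ((m-j:ℕ):ℝ)*lam)^(m-j)) := by
        intro j hj
        have hj' : j ≤ m := by simp [Finset.mem_range] at hj; omega
        have h1 : m+1-1-j = m-j := by omega
        have h2 : m-(m-j) = j := by omega
        have h3 : (m.choose (m-j)) = m.choose j := Nat.choose_symm hj'
        have h4 : fgp lam x ((m-j)+1) = x * ((x+lam) + ((m-j:ℕ):ℝ)*lam)^(m-j) := by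
          simp only [fgp, if_neg (Nat.succ_ne_zero _)]
          have hb : (x + (((m-j)+1:ℕ):ℝ)*lam) = ((x+lam) + ((m-j:ℕ):ℝ)*lam) := by
            push_cast; ring
          have he : (m-j)+1-1 = m-j := by omega
          rw [hb, he]
        rw [h1, h2, h3, h4]; ring
      rw [Finset.sum_congr rfl t4, ← Finset.mul_sum, abelA lam y m (x+lam)]
      push_cast; ring
    rw [e0]
    have final : fgp lam (x+y) (m+1) = (x+y) * (x + y + ((m+1:ℕ):ℝ)*lam)^m := by
      simp only [fgp, if_neg (Nat.succ_ne_zero m)]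
      norm_num
    rw [final]
    linarith [hT, hA]

noncomputable def gpR (lam θ : ℝ) (k : ℕ) : ℝ :=
  θ * (θ + k*lam) ^ ((k:ℝ) - 1) * Real.exp (-θ - k*lam) / (Nat.factorial k)

lemma base_pos {lam θ : ℝ} (hθ : 0 < θ) (hlam : 0 ≤ lam) (k : ℕ) : 0 < θ + k*lam := by
  positivity

lemma gpR_eq {lam θ : ℝ} (hθ : 0 < θ) (hlam : 0 ≤ lam) (k : ℕ) :
    gpR lam θ k = fgp lam θ k * Real.exp (-θ - k*lam) / (Nat.factorial k) := by
  unfold gpR fgp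
  by_cases hk : k = 0
  · subst hk
    rw [if_pos rfl]
    have h1 : θ * (θ + ((0:ℕ):ℝ)*lam) ^ (((0:ℕ):ℝ) - 1) = 1 := by
      simp only [Nat.cast_zero, zero_mul, add_zero]
      rw [show (0:ℝ) - 1 = -1 from by norm_num, Real.rpow_neg_one]
      field_simp
    rw [h1]
  · rw [if_neg hk]
    have h1 : ((k:ℝ) - 1) = ((k-1 : ℕ) : ℝ) := by
      rw [Nat.cast_sub (Nat.one_le_iff_ne_zero.mpr hk)]; norm_num
    rw [h1, Real.rpow_natCast]

lemma gpR_pos {lam θ : ℝ} (hθ : 0 < θ) (hlam : 0 ≤ lam) (k : ℕ) : 0 < gpR lam θ k := by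
  unfold gpR
  have h1 : 0 < θ + k*lam := base_pos hθ hlam k
  positivity

lemma gpR_conv {lam θa θb : ℝ} (ha : 0 < θa) (hb : 0 < θb) (hlam : 0 ≤ lam) (n : ℕ) :
    ∑ k ∈ range (n+1), gpR lam θa k * gpR lam θb (n-k) = gpR lam (θa+θb) n := by
  have key : ∀ k ∈ range (n+1), gpR lam θa k * gpR lam θb (n-k)
      = ((n.choose k : ℝ) * fgp lam θa k * fgp lam θb (n-k))
        * (Real.exp (-(θa+θb) - n*lam) / (Nat.factorial n)) := by
    intro k hk
    have hk' : k ≤ n := by simp [Finset.mem_range] at hk; omega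
    rw [gpR_eq ha hlam, gpR_eq hb hlam]
    have hexp : Real.exp (-θa - k*lam) * Real.exp (-θb - ((n-k:ℕ):ℝ)*lam)
        = Real.exp (-(θa+θb) - n*lam) := by
      rw [← Real.exp_add]
      congr 1
      rw [Nat.cast_sub hk']
      ring
    have hfact : ((n.choose k : ℕ):ℝ) * (Nat.factorial k : ℝ) * (Nat.factorial (n-k) : ℝ)
        = (Nat.factorial n : ℝ) := by
      exact_mod_cast congrArg (fun t : ℕ => (t:ℝ)) (Nat.choose_mul_factorial_mul_factorial hk')
    have hf1 : (Nat.factorial k : ℝ) ≠ 0 := by positivity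
    have hf2 : (Nat.factorial (n-k) : ℝ) ≠ 0 := by positivity
    have hf3 : (Nat.factorial n : ℝ) ≠ 0 := by positivity
    have hexp' : Real.exp (-θa - (k:ℝ)*lam) * Real.exp (-θb - ((n:ℝ) - (k:ℝ))*lam)
        = Real.exp (-θb + -θa - (n:ℝ)*lam) := by
      rw [← Real.exp_add]; congr 1; ring
    field_simp
    have hexp'' : Real.exp (-θa - (k:ℝ)*lam) * Real.exp (-θb - lam * ((n-k:ℕ):ℝ))
        = Real.exp (-(θa+θb) - lam * (n:ℝ)) := by
      rw [← Real.exp_add]; congr 1; rw [Nat.cast_sub hk']; ring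
    linear_combination (fgp lam θa k * fgp lam θb (n-k) * (Nat.factorial n : ℝ)) * hexp''
      - (fgp lam θa k * fgp lam θb (n-k) * Real.exp (-(θa+θb) - lam * (n:ℝ))) * hfact
  rw [Finset.sum_congr rfl key, ← Finset.sum_mul, cauchyC lam θa θb n, gpR_eq (by linarith) hlam]
  ring

lemma pow_div_fact_le {x : ℝ} (hx : 0 ≤ x) (k : ℕ) : x^k / (Nat.factorial k) ≤ Real.exp x := by
  have h := Real.sum_le_exp_of_nonneg hx (k+1)
  refine le_trans ?_ h
  exact Finset.single_le_sum (f := fun i => x^i / (Nat.factorial i))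
    (fun i _ => by positivity) (Finset.self_mem_range_succ k)

lemma lam_exp_lt_one {lam : ℝ} (h0 : 0 ≤ lam) (h1 : lam < 1) : lam * Real.exp (1 - lam) < 1 := by
  have h2 : lam - 1 + 1 < Real.exp (lam - 1) := Real.add_one_lt_exp (by intro h; apply absurd h; intro h'; nlinarith)
  have h3 : lam < Real.exp (lam - 1) := by linarith
  have h4 : Real.exp (1 - lam) * Real.exp (lam - 1) = 1 := by
    rw [← Real.exp_add]; norm_num
  nlinarith [Real.exp_pos (1-lam), Real.exp_pos (lam-1)]

lemma gpR_summable {lam θ : ℝ} (hθ : 0 < θ) (h0 : 0 ≤ lam) (h1 : lam < 1) :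
    Summable (gpR lam θ) := by
  set E := Real.exp (1 - lam) with hE
  have hEpos : 0 < E := Real.exp_pos _
  have hlt : lam * E < 1 := lam_exp_lt_one h0 h1
  set δ := (1 - lam * E) / (2 * E) with hδ
  have hδpos : 0 < δ := by apply div_pos <;> nlinarith
  set r := (δ + lam) * E with hr
  have hrpos : 0 < r := by positivity
  have hδE : δ * E = (1 - lam*E)/2 := by rw [hδ]; field_simp
  have hrlt : r < 1 := by rw [hr]; nlinarith
  set K := max 1 ⌈θ/δ⌉₊ with hK
  have hKθ : ∀ k : ℕ, K ≤ k → θ ≤ k * δ := by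
    intro k hk
    have hle : θ/δ ≤ (⌈θ/δ⌉₊:ℝ) := Nat.le_ceil _
    have hk2 : ((⌈θ/δ⌉₊:ℕ):ℝ) ≤ (k:ℝ) := by
      exact_mod_cast le_trans (le_max_right 1 _) hk
    calc θ = (θ/δ)*δ := by field_simp
      _ ≤ k*δ := by nlinarith
  have hbound : ∀ k : ℕ, gpR lam θ (k + K) ≤ (Real.exp (-θ) * r^K) * r^k := by
    intro k
    set m := k + K with hm
    have hm1 : 1 ≤ m := by
      have := le_max_left 1 ⌈θ/δ⌉₊
      omega
    have hm0 : m ≠ 0 := by omega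
    have hθm : θ ≤ m * δ := hKθ m (by omega)
    have hmpos : (0:ℝ) < m := by exact_mod_cast hm1
    have main : gpR lam θ m ≤ Real.exp (-θ) * r^m := by
      rw [gpR_eq hθ h0]
      rw [show fgp lam θ m = θ * (θ + m*lam)^(m-1) from by rw [fgp, if_neg hm0]]
      rw [div_le_iff₀ (by positivity : (0:ℝ) < (Nat.factorial m : ℝ))]
      have hbase : 0 ≤ θ + m*lam := by positivity
      have b1 : (θ + m*lam)^(m-1) ≤ ((m:ℝ)*(δ+lam))^(m-1) := by
        apply pow_le_pow_left₀ hbase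
        nlinarith
      have b2 : θ * ((m:ℝ)*(δ+lam))^(m-1) ≤ ((m:ℝ)*(δ+lam))^m := by
        have : ((m:ℝ)*(δ+lam))^m = ((m:ℝ)*(δ+lam))^(m-1) * ((m:ℝ)*(δ+lam)) := by
          rw [← pow_succ]
          congr 1
          omega
        rw [this]
        have hpos : (0:ℝ) ≤ ((m:ℝ)*(δ+lam))^(m-1) := by positivity
        have hge : (0:ℝ) ≤ (m:ℝ)*(δ+lam) - θ := by nlinarith [mul_nonneg hmpos.le h0]
        nlinarith [mul_nonneg hpos hge]
      have b4 : (m:ℝ)^m ≤ (Nat.factorial m : ℝ) * Real.exp m := by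
        have := pow_div_fact_le (le_of_lt hmpos) m
        rw [div_le_iff₀ (by positivity : (0:ℝ) < (Nat.factorial m : ℝ))] at this
        linarith
      have hexps : Real.exp (-θ - m*lam) = Real.exp (-θ) * (Real.exp (-lam))^m := by
        rw [← Real.exp_nat_mul, ← Real.exp_add]
        congr 1; ring
      have hEe : Real.exp (-lam) * Real.exp 1 = E := by
        rw [hE, ← Real.exp_add]; congr 1; ring
      calc θ * (θ + m*lam)^(m-1) * Real.exp (-θ - m*lam)
          ≤ ((m:ℝ)*(δ+lam))^m * Real.exp (-θ - m*lam) := by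
            have := le_trans (mul_le_mul_of_nonneg_left b1 hθ.le) b2
            exact mul_le_mul_of_nonneg_right this (Real.exp_pos _).le
        _ = (m:ℝ)^m * ((δ+lam)^m * (Real.exp (-lam))^m * Real.exp (-θ)) := by
            rw [mul_pow, hexps]; ring
        _ ≤ ((Nat.factorial m : ℝ) * Real.exp m) * ((δ+lam)^m * (Real.exp (-lam))^m * Real.exp (-θ)) := by
            apply mul_le_mul_of_nonneg_right b4
            positivity
        _ = Real.exp (-θ) * r^m * (Nat.factorial m : ℝ) := by
            rw [hr, show Real.exp (m:ℝ) = (Real.exp 1)^m from by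
              rw [← Real.exp_nat_mul]; congr 1; ring]
            rw [mul_pow, ← hEe, mul_pow]
            ring
    calc gpR lam θ m ≤ Real.exp (-θ) * r^m := main
      _ = (Real.exp (-θ) * r^K) * r^k := by rw [hm, pow_add]; ring
  have hgeo : Summable (fun k : ℕ => (Real.exp (-θ) * r^K) * r^k) :=
    (summable_geometric_of_lt_one hrpos.le hrlt).mul_left _
  have hsum : Summable (fun k : ℕ => gpR lam θ (k + K)) :=
    Summable.of_nonneg_of_le (fun k => (gpR_pos hθ h0 _).le) hbound hgeo
  exact (summable_nat_add_iff K).mp hsum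

noncomputable def Q (lam θ : ℝ) (k : ℕ) : ℝ≥0∞ := ENNReal.ofReal (gpR lam θ k)

lemma Q_ne_zero {lam θ : ℝ} (hθ : 0 < θ) (h0 : 0 ≤ lam) (k : ℕ) : Q lam θ k ≠ 0 :=
  ne_of_gt (ENNReal.ofReal_pos.mpr (gpR_pos hθ h0 k))

lemma Q_conv {lam θa θb : ℝ} (ha : 0 < θa) (hb : 0 < θb) (h0 : 0 ≤ lam) (n : ℕ) :
    Q lam (θa+θb) n = ∑ k ∈ range (n+1), Q lam θa k * Q lam θb (n-k) := by
  unfold Q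
  rw [← gpR_conv ha hb h0 n, ENNReal.ofReal_sum_of_nonneg
    (fun k _ => mul_nonneg (gpR_pos ha h0 _).le (gpR_pos hb h0 _).le)]
  exact Finset.sum_congr rfl fun k _ => ENNReal.ofReal_mul (gpR_pos ha h0 _).le

lemma gpd_expand {θa θb lam : ℝ} (ha : 0 < θa) (hb : 0 < θb) (h0 : 0 ≤ lam) (h1 : lam < 1)
    (z : ℤ) :
    ENNReal.ofReal (gpdPmf θa θb lam z)
      = ∑' s : ℕ, if 0 ≤ (s:ℤ) + z then
          Q lam θb s * Q lam θa ((s:ℤ)+z).toNat else 0 := by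
  set f : ℕ → ℝ := fun s => if 0 ≤ (s:ℤ)+z then gpR lam θb s * gpR lam θa ((s:ℤ)+z).toNat else 0
    with hf
  have hfnonneg : ∀ s, 0 ≤ f s := by
    intro s
    by_cases h : 0 ≤ (s:ℤ)+z
    · simp only [hf, if_pos h]
      exact le_of_lt (mul_pos (gpR_pos hb h0 _) (gpR_pos ha h0 _))
    · simp [hf, h]
  have hfsum : Summable f := by
    have hle : ∀ s, f s ≤ gpR lam θb s * (∑' k, gpR lam θa k) := by
      intro s
      by_cases h : 0 ≤ (s:ℤ)+z
      · simp only [hf, if_pos h]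
        apply mul_le_mul_of_nonneg_left _ (gpR_pos hb h0 _).le
        exact Summable.le_tsum (gpR_summable ha h0 h1) _ (fun _ _ => (gpR_pos ha h0 _).le)
      · simp only [hf, if_neg h]
        exact mul_nonneg (gpR_pos hb h0 _).le (tsum_nonneg (fun _ => (gpR_pos ha h0 _).le))
    exact Summable.of_nonneg_of_le hfnonneg hle ((gpR_summable hb h0 h1).mul_right _)
  have heq : gpdPmf θa θb lam z = ∑' s, f s := by
    unfold gpdPmf
    rw [← tsum_mul_left]
    congr 1; funext s
    by_cases h : 0 ≤ (s:ℤ)+z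
    · rw [if_pos h]
      simp only [hf, if_pos h]
      set N := ((s:ℤ)+z).toNat with hN
      have hNz : ((N:ℕ):ℤ) = (s:ℤ) + z := by rw [hN]; exact Int.toNat_of_nonneg h
      have hcast : ((s:ℝ) + (z:ℝ)) = ((N:ℕ):ℝ) := by
        have := congrArg (fun t : ℤ => (t:ℝ)) hNz
        push_cast at this
        linarith
      rw [hcast]
      have hexp : Real.exp (-θa - θb - (z:ℝ)*lam) * Real.exp (-2*(s:ℝ)*lam)
          = Real.exp (-θb - (s:ℝ)*lam) * Real.exp (-θa - (N:ℝ)*lam) := by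
        rw [← Real.exp_add, ← Real.exp_add]
        congr 1
        have hz : (z:ℝ) = (N:ℝ) - (s:ℝ) := by
          have := congrArg (fun t : ℤ => (t:ℝ)) hNz
          push_cast at this
          linarith
        rw [hz]; ring
      unfold gpR
      set A := (θb + (s:ℝ)*lam) ^ ((s:ℝ) - 1) with hA
      set B := (θa + (N:ℝ)*lam) ^ (((N:ℕ):ℝ) - 1) with hB
      linear_combination (θb * A / (Nat.factorial s : ℝ) * (θa * B / (Nat.factorial N : ℝ))) * hexp
    · rw [if_neg h]
      simp [hf, h]
  rw [heq, ENNReal.ofReal_tsum_of_nonneg hfnonneg hfsum]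
  congr 1; funext s
  by_cases h : 0 ≤ (s:ℤ)+z
  · simp only [hf, if_pos h]
    rw [Q, Q, ENNReal.ofReal_mul (gpR_pos hb h0 _).le]
  · simp [hf, h]

lemma measure_sub_eq {Ω : Type*} [MeasurableSpace Ω] (P : Measure Ω)
    (X Y : Ω → ℤ) (hXm : Measurable X) (hYm : Measurable Y)
    (hindep : IndepFun X Y P) (z : ℤ) :
    P {ω | X ω - Y ω = z} = ∑' y : ℤ, P (X ⁻¹' {z+y}) * P (Y ⁻¹' {y}) := by
  have hset : {ω | X ω - Y ω = z} = ⋃ y : ℤ, (X ⁻¹' {z+y} ∩ Y ⁻¹' {y}) := by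
    ext ω
    simp only [Set.mem_setOf_eq, Set.mem_iUnion, Set.mem_inter_iff, Set.mem_preimage,
      Set.mem_singleton_iff]
    constructor
    · intro h; exact ⟨Y ω, by omega, rfl⟩
    · rintro ⟨y, h1, h2⟩; omega
  rw [hset, measure_iUnion]
  · apply tsum_congr
    intro y
    exact hindep.measure_inter_preimage_eq_mul _ _ (measurableSet_singleton _)
      (measurableSet_singleton _)
  · intro y y' hne
    simp only [Function.onFun, Set.disjoint_left]
    intro ω hω hω'
    have h1 := hω.2
    have h2 := hω'.2
    simp only [Set.mem_preimage, Set.mem_singleton_iff] at h1 h2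
    exact hne (by omega)
  · intro y
    exact (hXm (measurableSet_singleton _)).inter (hYm (measurableSet_singleton _))

lemma core {θ1 θ2 θ3 θ4 lam : ℝ} (h1 : 0 < θ1) (h2 : 0 < θ2) (h3 : 0 < θ3) (h4 : 0 < θ4)
    (h0 : 0 ≤ lam) (z : ℤ) :
    ∑' y : ℤ, (∑' s : ℕ, if 0 ≤ (s:ℤ) + (z+y) then
        Q lam θ2 s * Q lam θ1 ((s:ℤ)+(z+y)).toNat else 0)
      * (∑' t : ℕ, if 0 ≤ (t:ℤ) + y then Q lam θ4 t * Q lam θ3 ((t:ℤ)+y).toNat else 0)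
    = ∑' u : ℕ, if 0 ≤ (u:ℤ) + z then
        Q lam (θ2+θ3) u * Q lam (θ1+θ4) ((u:ℤ)+z).toNat else 0 := by
  set G : ℤ × ℕ × ℕ → ℝ≥0∞ := fun p =>
    (if 0 ≤ (p.2.1:ℤ) + (z + p.1) then Q lam θ2 p.2.1 * Q lam θ1 ((p.2.1:ℤ)+(z+p.1)).toNat else 0) *
    (if 0 ≤ (p.2.2:ℤ) + p.1 then Q lam θ4 p.2.2 * Q lam θ3 ((p.2.2:ℤ)+p.1).toNat else 0)
    with hG
  set H : ℕ × ℕ × ℕ → ℝ≥0∞ := fun p =>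
    if 0 ≤ (p.1:ℤ) + z ∧ p.2.1 ≤ p.1 ∧ p.2.2 ≤ ((p.1:ℤ)+z).toNat
    then Q lam θ2 p.2.1 * Q lam θ3 (p.1 - p.2.1)
      * (Q lam θ1 p.2.2 * Q lam θ4 (((p.1:ℤ)+z).toNat - p.2.2)) else 0
    with hH
  have hGne : ∀ (y : ℤ) (s t : ℕ), G (y,s,t) ≠ 0 → 0 ≤ (s:ℤ)+(z+y) ∧ 0 ≤ (t:ℤ)+y := by
    intro y s t hne
    by_cases c1 : 0 ≤ (s:ℤ)+(z+y)
    · by_cases c2 : 0 ≤ (t:ℤ)+y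
      · exact ⟨c1, c2⟩
      · exfalso; apply hne; simp [hG, c2]
    · exfalso; apply hne; simp [hG, c1]
  have hGpos : ∀ (y : ℤ) (s t : ℕ), 0 ≤ (s:ℤ)+(z+y) → 0 ≤ (t:ℤ)+y → G (y,s,t) ≠ 0 := by
    intro y s t c1 c2
    simp only [hG, if_pos c1, if_pos c2]
    exact mul_ne_zero (mul_ne_zero (Q_ne_zero h2 h0 _) (Q_ne_zero h1 h0 _))
      (mul_ne_zero (Q_ne_zero h4 h0 _) (Q_ne_zero h3 h0 _))
  -- LHS = ∑' G
  have hL : ∑' y : ℤ, (∑' s : ℕ, if 0 ≤ (s:ℤ) + (z+y) then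
        Q lam θ2 s * Q lam θ1 ((s:ℤ)+(z+y)).toNat else 0)
      * (∑' t : ℕ, if 0 ≤ (t:ℤ) + y then Q lam θ4 t * Q lam θ3 ((t:ℤ)+y).toNat else 0)
      = ∑' p : ℤ × ℕ × ℕ, G p := by
    rw [ENNReal.tsum_prod']
    apply tsum_congr
    intro y
    rw [ENNReal.tsum_prod']
    rw [← ENNReal.tsum_mul_right]
    apply tsum_congr
    intro s
    rw [← ENNReal.tsum_mul_left]
  -- RHS = ∑' H
  have hR : (∑' u : ℕ, if 0 ≤ (u:ℤ) + z then
        Q lam (θ2+θ3) u * Q lam (θ1+θ4) ((u:ℤ)+z).toNat else 0)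
      = ∑' p : ℕ × ℕ × ℕ, H p := by
    rw [ENNReal.tsum_prod']
    apply tsum_congr
    intro u
    by_cases hu : 0 ≤ (u:ℤ) + z
    · rw [if_pos hu, Q_conv h2 h3 h0, Q_conv h1 h4 h0, Finset.sum_mul_sum]
      rw [ENNReal.tsum_prod']
      rw [tsum_eq_sum (s := range (u+1))
        (by
          intro k hk
          have : ∀ j : ℕ, H (u, k, j) = 0 := by
            intro j
            simp only [hH]
            rw [if_neg]
            rintro ⟨-, hku, -⟩
            simp [Finset.mem_range] at hk
            omega
          simp [this])]
      apply Finset.sum_congr rfl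
      intro k hk
      rw [tsum_eq_sum (s := range (((u:ℤ)+z).toNat + 1))
        (by
          intro j hj
          simp only [hH]
          rw [if_neg]
          rintro ⟨-, -, hjn⟩
          simp [Finset.mem_range] at hj
          omega)]
      apply Finset.sum_congr rfl
      intro j hj
      simp only [hH]
      rw [if_pos ⟨hu, by simp [Finset.mem_range] at hk; omega, by simp [Finset.mem_range] at hj; omega⟩]
    · rw [if_neg hu]
      symm
      have : ∀ q : ℕ × ℕ, H (u, q) = 0 := by
        intro q
        simp only [hH]
        rw [if_neg]
        rintro ⟨h, -, -⟩
        exact hu h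
      simp [this]
  rw [hL, hR]
  -- bijection
  symm
  apply tsum_eq_tsum_of_ne_zero_bij
    (i := fun x => (x.1.2.1 + ((x.1.2.2:ℤ) + x.1.1).toNat, x.1.2.1, ((x.1.2.1:ℤ) + (z + x.1.1)).toNat))
  · rintro ⟨⟨y, s, t⟩, hx⟩ ⟨⟨y', s', t'⟩, hx'⟩ h
    have c := hGne y s t (by simpa [Function.mem_support] using hx)
    have c' := hGne y' s' t' (by simpa [Function.mem_support] using hx')
    simp only [Prod.mk.injEq] at h
    apply Subtype.ext
    simp only [Prod.mk.injEq]
    obtain ⟨e1, e2, e3⟩ := h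
    refine ⟨by omega, by omega, by omega⟩
  · rintro ⟨u, k, j⟩ hp
    have hc : 0 ≤ (u:ℤ) + z ∧ k ≤ u ∧ j ≤ ((u:ℤ)+z).toNat := by
      by_contra hcon
      apply hp
      simp only [hH, Function.mem_support] at *
      rw [if_neg hcon]
    refine ⟨⟨((j:ℤ) - z - k, k, (((u:ℤ)+z).toNat - j)), ?_⟩, ?_⟩
    · simp only [Function.mem_support]
      apply hGpos
      · omega
      · omega
    · simp only [Prod.mk.injEq]
      refine ⟨by omega, by trivial, by omega⟩
  · rintro ⟨⟨y, s, t⟩, hx⟩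
    have c := hGne y s t (by simpa [Function.mem_support] using hx)
    simp only [hH, hG]
    rw [if_pos (by omega : 0 ≤ ((s + ((t:ℤ) + y).toNat : ℕ):ℤ) + z
        ∧ s ≤ s + ((t:ℤ) + y).toNat
        ∧ ((s:ℤ) + (z + y)).toNat ≤ (((s + ((t:ℤ) + y).toNat : ℕ):ℤ) + z).toNat)]
    rw [if_pos c.1, if_pos c.2]
    have e1 : s + ((t:ℤ) + y).toNat - s = ((t:ℤ) + y).toNat := by omega
    have e2 : ((((s + ((t:ℤ) + y).toNat : ℕ):ℤ) + z).toNat - ((s:ℤ) + (z + y)).toNat) = t := by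
      omega
    rw [e1, e2]
    ring

/-- The difference of two independent generalized Poisson difference random variables
with parameters `(θ₁, θ₂, λ)` and `(θ₃, θ₄, λ)` is a generalized Poisson difference
random variable with parameters `(θ₁+θ₄, θ₂+θ₃, λ)`. -/
theorem gpd_convolution_sub {Ω : Type*} [MeasurableSpace Ω] (P : Measure Ω)
    [IsProbabilityMeasure P] (X Y : Ω → ℤ) (θ1 θ2 θ3 θ4 lam : ℝ)
    (hθ1 : 0 < θ1) (hθ2 : 0 < θ2) (hθ3 : 0 < θ3) (hθ4 : 0 < θ4)
    (hlam0 : 0 ≤ lam) (hlam1 : lam < 1)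
    (hXm : Measurable X) (hYm : Measurable Y)
    (hX : HasGPD P X θ1 θ2 lam) (hY : HasGPD P Y θ3 θ4 lam)
    (hindep : IndepFun X Y P) :
    HasGPD P (fun ω => X ω - Y ω) (θ1 + θ4) (θ2 + θ3) lam := by
  intro z
  have hpre : ∀ (Z : Ω → ℤ) (w : ℤ), Z ⁻¹' {w} = {ω | Z ω = w} := by
    intro Z w
    ext ω
    simp [Set.mem_preimage]
  show P {ω | X ω - Y ω = z} = ENNReal.ofReal (gpdPmf (θ1 + θ4) (θ2 + θ3) lam z)
  rw [measure_sub_eq P X Y hXm hYm hindep z]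
  have expand1 : ∀ y : ℤ, P (X ⁻¹' {z+y}) * P (Y ⁻¹' {y})
      = (∑' s : ℕ, if 0 ≤ (s:ℤ) + (z+y) then
          Q lam θ2 s * Q lam θ1 ((s:ℤ)+(z+y)).toNat else 0)
        * (∑' t : ℕ, if 0 ≤ (t:ℤ) + y then Q lam θ4 t * Q lam θ3 ((t:ℤ)+y).toNat else 0) := by
    intro y
    rw [hpre X (z+y), hpre Y y, hX (z+y), hY y,
      gpd_expand hθ1 hθ2 hlam0 hlam1 (z+y), gpd_expand hθ3 hθ4 hlam0 hlam1 y]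
  rw [tsum_congr expand1, core hθ1 hθ2 hθ3 hθ4 hlam0 z]
  exact (gpd_expand (by linarith) (by linarith) hlam0 hlam1 z).symm
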